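/- For all real numbers c and φ with c > 0 and 0 < φ < π/3, there exist real numbers a and b with 0 < a and 0 ≤ b such that cosh b = cosh a · cosh c − sinh a · sinh c · cos φ and a + 2b < 2c. -/

import Mathlib

/-- Quadratic upper bound on `exp` for `|x| ≤ 1`. -/
lemma exp_le_quadratic {x : ℝ} (h : |x| ≤ 1) : Real.exp x ≤ 1 + x + (3/4) * x ^ 2 := by
  have hb := Real.exp_bound h (n := 2) (by norm_num)
  have hsum : ∑ m ∈ Finset.range 2, x ^ m / (Nat.factorial m) = 1 + x := by
    simp [Finset.sum_range_succ, Nat.factorial]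
  rw [hsum] at hb
  have h1 := (abs_sub_le_iff.1 hb).1
  have h2 : |x| ^ 2 = x ^ 2 := sq_abs x
  norm_num [Nat.factorial] at h1
  nlinarith [sq_abs x]

/-- A nonneg preimage under `cosh` for any `x ≥ 1`. -/
lemma exists_cosh_eq {x : ℝ} (hx : 1 ≤ x) : ∃ b : ℝ, 0 ≤ b ∧ Real.cosh b = x := by
  set s := Real.sqrt (x ^ 2 - 1) with hs
  have hs0 : 0 ≤ s := Real.sqrt_nonneg _
  have hssq : s ^ 2 = x ^ 2 - 1 := Real.sq_sqrt (by nlinarith)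
  have hy1 : (1:ℝ) ≤ x + s := by linarith
  have hy0 : (0:ℝ) < x + s := by linarith
  refine ⟨Real.log (x + s), Real.log_nonneg hy1, ?_⟩
  rw [Real.cosh_eq, Real.exp_log hy0, Real.exp_neg, Real.exp_log hy0]
  have hprod : (x + s) * (x - s) = 1 := by nlinarith
  have hinv : (x + s)⁻¹ = x - s := inv_eq_of_mul_eq_one_right hprod
  rw [hinv]; ring

/-- The hyperbolic trigonometry computation behind Figure 2.0: if two geodesic
segments of length `c` meet at an angle `2φ < 120°`, then moving the junction a
distance `a` along the bisector produces (via the hyperbolic law of cosines)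
two segments of length `b` with `a + 2b < 2c`. -/
theorem stmt_4 (c φ : ℝ) (hc : 0 < c) (hφ0 : 0 < φ) (hφ : φ < Real.pi / 3) :
    ∃ a b : ℝ, 0 < a ∧ 0 ≤ b ∧
      Real.cosh b = Real.cosh a * Real.cosh c - Real.sinh a * Real.sinh c * Real.cos φ ∧
      a + 2 * b < 2 * c := by
  obtain ⟨t, ht⟩ : ∃ t : ℝ, t = Real.cos φ := ⟨_, rfl⟩
  have hπ : 0 < Real.pi := Real.pi_pos
  have ht1 : t ≤ 1 := ht ▸ Real.cos_le_one φ
  have hthalf : 1/2 < t := by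
    have : Real.cos (Real.pi / 3) < Real.cos φ := by
      apply Real.cos_lt_cos_of_nonneg_of_le_pi hφ0.le (by linarith) hφ
    rw [Real.cos_pi_div_three] at this
    rw [ht]; exact this
  have hε0 : 0 < t - 1/2 := by linarith
  have hcoshc : 0 < Real.cosh c := Real.cosh_pos c
  have hsinhc : 0 < Real.sinh c := by simpa using hc
  obtain ⟨a, ha⟩ : ∃ a : ℝ, a = min c (min 1 (Real.sinh c / Real.cosh c * (t - 1/2) / 2)) := ⟨_, rfl⟩
  have ha0 : 0 < a := by
    rw [ha]
    apply lt_min hc (lt_min one_pos _)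
    positivity
  have hac : a ≤ c := ha ▸ min_le_left _ _
  have ha1 : a ≤ 1 := ha ▸ le_trans (min_le_right _ _) (min_le_left _ _)
  have hakey : a ≤ Real.sinh c / Real.cosh c * (t - 1/2) / 2 :=
    ha ▸ le_trans (min_le_right _ _) (min_le_right _ _)
  -- quadratic bounds on cosh a, sinh a, sinh (a/2)
  have habs : |a| ≤ 1 := by rw [abs_of_pos ha0]; exact ha1
  have habs' : |(-a)| ≤ 1 := by rwa [abs_neg]
  have habs2 : |a/2| ≤ 1 := by rw [abs_of_pos (by linarith)]; linarith
  have habs2' : |(-(a/2))| ≤ 1 := by rwa [abs_neg]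
  have he1 : Real.exp a ≤ 1 + a + (3/4) * a ^ 2 := exp_le_quadratic habs
  have he2 : Real.exp (-a) ≤ 1 - a + (3/4) * a ^ 2 := by
    have := exp_le_quadratic habs'
    simpa [sub_eq_add_neg] using this
  have he3 : Real.exp (a/2) ≤ 1 + a/2 + (3/4) * (a/2) ^ 2 := exp_le_quadratic habs2
  have he4 : (1:ℝ) - a/2 ≤ Real.exp (-(a/2)) := by
    have := Real.add_one_le_exp (-(a/2)); linarith
  have he5 : (1:ℝ) + a ≤ Real.exp a := by
    have := Real.add_one_le_exp a; linarith
  have he6 : (1:ℝ) - a ≤ Real.exp (-a) := by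
    have := Real.add_one_le_exp (-a); linarith
  have hca : Real.cosh a ≤ 1 + (3/4) * a ^ 2 := by
    rw [Real.cosh_eq]; linarith
  have hsa : a - (3/8) * a ^ 2 ≤ Real.sinh a := by
    rw [Real.sinh_eq]; linarith
  have hsh : Real.sinh (a/2) ≤ a/2 + (3/32) * a ^ 2 := by
    rw [Real.sinh_eq]; linarith
  have hch : (1:ℝ) ≤ Real.cosh (a/2) := Real.one_le_cosh _
  have hsa0 : 0 ≤ Real.sinh a := by simpa using ha0.le
  -- sinh c < cosh c
  have hsc : Real.sinh c < Real.cosh c := Real.sinh_lt_cosh c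
  -- the key strict inequality
  have hamax : 2 * (Real.cosh c * a) ≤ Real.sinh c * (t - 1/2) := by
    have h2 : Real.cosh c * (Real.sinh c / Real.cosh c * (t - 1/2) / 2)
        = Real.sinh c * (t - 1/2) / 2 := by
      field_simp
    have h3 := mul_le_mul_of_nonneg_left hakey hcoshc.le
    rw [h2] at h3
    linarith
  have ht0 : 0 ≤ t := by linarith
  have hst : 0 ≤ Real.sinh c * t := mul_nonneg hsinhc.le ht0
  have P1 : Real.cosh a * Real.cosh c ≤ Real.cosh c + (3/4) * (Real.cosh c * a^2) :=
    by linarith [mul_le_mul_of_nonneg_right hca hcoshc.le]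
  have P2 : Real.sinh c * t * a - (3/8) * (Real.sinh c * a^2)
      ≤ Real.sinh a * Real.sinh c * t := by
    linarith [mul_le_mul_of_nonneg_right hsa hst,
      mul_nonneg (mul_nonneg hsinhc.le (sq_nonneg a)) (by linarith : (0:ℝ) ≤ 1 - t)]
  have P3 : Real.cosh c ≤ Real.cosh c * Real.cosh (a/2) := by
    linarith [mul_le_mul_of_nonneg_left hch hcoshc.le]
  have P4 : Real.sinh c * Real.sinh (a/2) ≤ Real.sinh c * (a/2) + (3/32) * (Real.sinh c * a^2) := by
    linarith [mul_le_mul_of_nonneg_left hsh hsinhc.le]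
  have P5 : Real.sinh c * a^2 ≤ Real.cosh c * a^2 :=
    mul_le_mul_of_nonneg_right hsc.le (sq_nonneg a)
  have P6 : 2 * (Real.cosh c * a^2) ≤ Real.sinh c * (t - 1/2) * a := by
    linarith [mul_le_mul_of_nonneg_right hamax ha0.le]
  have P7 : 0 < Real.sinh c * (t - 1/2) * a := by positivity
  have hkey : Real.cosh a * Real.cosh c - Real.sinh a * Real.sinh c * t
      < Real.cosh (c - a/2) := by
    rw [Real.cosh_sub]
    linarith [P1, P2, P3, P4, P5, P6, P7]
  -- the value is ≥ 1, so it has a cosh-preimage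
  have hge1 : (1:ℝ) ≤ Real.cosh a * Real.cosh c - Real.sinh a * Real.sinh c * t := by
    have h1 : Real.sinh a * Real.sinh c * t ≤ Real.sinh a * Real.sinh c := by
      have := mul_le_mul_of_nonneg_left ht1 (mul_nonneg hsa0 hsinhc.le)
      linarith [this]
    have h2 : Real.cosh (a - c) = Real.cosh a * Real.cosh c - Real.sinh a * Real.sinh c :=
      Real.cosh_sub a c
    have h3 : (1:ℝ) ≤ Real.cosh (a - c) := Real.one_le_cosh _
    linarith
  obtain ⟨b, hb0, hbc⟩ := exists_cosh_eq hge1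
  refine ⟨a, b, ha0, hb0, by rw [hbc, ht], ?_⟩
  have hblt : b < c - a/2 := by
    have : Real.cosh b < Real.cosh (c - a/2) := by rw [hbc]; exact hkey
    rw [Real.cosh_lt_cosh] at this
    have h4 : |b| = b := abs_of_nonneg hb0
    have h5 : |c - a/2| = c - a/2 := abs_of_nonneg (by linarith)
    rw [h4, h5] at this
    exact this
  linarith
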